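/- For every real a, the improper integral ∫_{−∞}^{∞} sech³(t)·cos(a t) dt equals π(1 + a²) / (2·cosh(πa/2)). -/

import Mathlib

open MeasureTheory Real Set

noncomputable def sigm (t : ℝ) : ℝ := 1 / (1 + Real.exp (-2 * t))

lemma exp_mul_exp_neg (t : ℝ) : Real.exp t * Real.exp (-t) = 1 := by
  rw [← Real.exp_add]; simp

lemma one_add_exp_eq (t : ℝ) :
    1 + Real.exp (-2 * t) = 2 * Real.cosh t * Real.exp (-t) := by
  rw [Real.cosh_eq, show (-2 : ℝ) * t = -t + -t by ring, Real.exp_add]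
  linear_combination - exp_mul_exp_neg t

lemma sigm_eq (t : ℝ) : sigm t = Real.exp t / (2 * Real.cosh t) := by
  unfold sigm
  rw [one_add_exp_eq t]
  have hc := Real.cosh_pos t
  have he := Real.exp_pos (-t)
  rw [eq_div_iff (by positivity)]
  field_simp
  linear_combination -exp_mul_exp_neg t

lemma one_sub_sigm (t : ℝ) : 1 - sigm t = Real.exp (-t) / (2 * Real.cosh t) := by
  rw [sigm_eq]
  have hc := Real.cosh_pos t
  rw [Real.cosh_eq]
  field_simp
  ring

lemma sigm_pos (t : ℝ) : 0 < sigm t := by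
  rw [sigm_eq]; positivity

lemma one_sub_sigm_pos (t : ℝ) : 0 < 1 - sigm t := by
  rw [one_sub_sigm]; positivity

lemma sigm_image : sigm '' Set.univ = Set.Ioo (0 : ℝ) 1 := by
  ext y
  constructor
  · rintro ⟨t, -, rfl⟩
    exact ⟨sigm_pos t, by linarith [one_sub_sigm_pos t]⟩
  · rintro ⟨h0, h1⟩
    refine ⟨-Real.log (1 / y - 1) / 2, trivial, ?_⟩
    have hpos : 0 < 1 / y - 1 := by
      have := one_lt_one_div h0 h1
      linarith
    unfold sigm
    rw [show (-2 : ℝ) * (-Real.log (1 / y - 1) / 2) = Real.log (1 / y - 1) by ring,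
      Real.exp_log hpos]
    field_simp
    ring

lemma sigm_inj : Set.InjOn sigm Set.univ := by
  rintro s - t - h
  unfold sigm at h
  have hs := Real.exp_pos (-2 * s)
  have ht := Real.exp_pos (-2 * t)
  field_simp at h
  have h' : Real.exp (-(2 * t)) = Real.exp (-(2 * s)) := by linarith
  have := Real.exp_injective h'
  linarith

lemma sigm_hasDerivAt (t : ℝ) :
    HasDerivAt sigm (1 / (2 * Real.cosh t ^ 2)) t := by
  have h1 : HasDerivAt (fun t : ℝ => -2 * t) (-2) t := by
    simpa using (hasDerivAt_id t).const_mul (-2)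
  have h2 := h1.exp
  have h3 := h2.const_add 1
  have hne : 1 + Real.exp (-2 * t) ≠ 0 := by positivity
  have h4 := h3.inv hne
  have : HasDerivAt (fun t : ℝ => (1 + Real.exp (-2 * t))⁻¹)
      (1 / (2 * Real.cosh t ^ 2)) t := by
    refine HasDerivAt.congr_deriv h4 ?_
    rw [one_add_exp_eq t]
    have hc := Real.cosh_pos t
    have he := Real.exp_pos (-t)
    rw [show (-2 : ℝ) * t = -t + -t by ring, Real.exp_add]
    field_simp
  show HasDerivAt (fun t : ℝ => 1 / (1 + Real.exp (-2 * t))) (1 / (2 * Real.cosh t ^ 2)) t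
  simpa [one_div, neg_mul] using this

lemma cpow_pos_eq {r : ℝ} (hr : 0 < r) (w : ℂ) :
    (r : ℂ) ^ w = Complex.exp (w * (Real.log r : ℂ)) := by
  rw [Complex.cpow_def_of_ne_zero (by exact_mod_cast hr.ne'), ← Complex.ofReal_log hr.le,
    mul_comm]

lemma key_pt (a t : ℝ) :
    |1 / (2 * Real.cosh t ^ 2)| •
      ((↑(sigm t) : ℂ) ^ ((3/2 : ℂ) + ↑(a/2) * Complex.I - 1) *
        ((1 : ℂ) - ↑(sigm t)) ^ ((3/2 : ℂ) - ↑(a/2) * Complex.I - 1))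
    = (1/4 : ℂ) * ((1 / Real.cosh t : ℝ) : ℂ) ^ 3 * Complex.exp (↑a * ↑t * Complex.I) := by
  have hc := Real.cosh_pos t
  have h2c : (0:ℝ) < 2 * Real.cosh t := by positivity
  have hone : ((1 : ℂ) - ↑(sigm t)) = ((1 - sigm t : ℝ) : ℂ) := by push_cast; ring
  rw [hone, cpow_pos_eq (sigm_pos t), cpow_pos_eq (one_sub_sigm_pos t), ← Complex.exp_add]
  have hlog1 : Real.log (sigm t) = t - Real.log (2 * Real.cosh t) := by
    rw [sigm_eq, Real.log_div (Real.exp_ne_zero t) (ne_of_gt h2c), Real.log_exp]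
  have hlog2 : Real.log (1 - sigm t) = -t - Real.log (2 * Real.cosh t) := by
    rw [one_sub_sigm, Real.log_div (Real.exp_ne_zero (-t)) (ne_of_gt h2c), Real.log_exp]
  rw [hlog1, hlog2]
  have hexp : ((3/2 : ℂ) + ↑(a/2) * Complex.I - 1) * ((t - Real.log (2 * Real.cosh t) : ℝ) : ℂ)
      + ((3/2 : ℂ) - ↑(a/2) * Complex.I - 1) * ((-t - Real.log (2 * Real.cosh t) : ℝ) : ℂ)
      = ↑a * ↑t * Complex.I - ((Real.log (2 * Real.cosh t) : ℝ) : ℂ) := by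
    push_cast; ring
  rw [hexp, Complex.exp_sub, ← Complex.ofReal_exp, Real.exp_log h2c]
  rw [abs_of_pos (by positivity : (0:ℝ) < 1 / (2 * Real.cosh t ^ 2)), Complex.real_smul]
  have hcC : (Real.cosh t : ℂ) ≠ 0 := by exact_mod_cast (ne_of_gt hc)
  push_cast
  field_simp
  ring

theorem integral_sech_cube_cos (a : ℝ) :
    ∫ t : ℝ, (1 / Real.cosh t) ^ 3 * Real.cos (a * t)
      = Real.pi * (1 + a ^ 2) / (2 * Real.cosh (Real.pi * a / 2)) := by
  have hc2 : (0:ℝ) < Real.cosh (Real.pi * a / 2) := Real.cosh_pos _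
  set u : ℂ := (3/2 : ℂ) + ↑(a/2) * Complex.I with hu_def
  set v : ℂ := (3/2 : ℂ) - ↑(a/2) * Complex.I with hv_def
  have hu : 0 < u.re := by simp [hu_def]
  have hv : 0 < v.re := by simp [hv_def]
  set g : ℝ → ℂ := fun x : ℝ => (x : ℂ) ^ (u - 1) * ((1 : ℂ) - (x : ℂ)) ^ (v - 1) with hg_def
  -- Beta integral as an integral over Ioo
  have hBeta : Complex.betaIntegral u v = ∫ x in Set.Ioo (0:ℝ) 1, g x := by
    rw [Complex.betaIntegral, intervalIntegral.integral_of_le zero_le_one,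
      MeasureTheory.integral_Ioc_eq_integral_Ioo]
  -- substitution
  have hderiv : ∀ x ∈ (Set.univ : Set ℝ),
      HasDerivWithinAt sigm (1 / (2 * Real.cosh x ^ 2)) Set.univ x :=
    fun x _ => (sigm_hasDerivAt x).hasDerivWithinAt
  have hEq := MeasureTheory.integral_image_eq_integral_abs_deriv_smul
    MeasurableSet.univ hderiv sigm_inj g
  rw [sigm_image] at hEq
  have hkey : ∀ t : ℝ, |1 / (2 * Real.cosh t ^ 2)| • g (sigm t)
      = (1/4 : ℂ) * ((1 / Real.cosh t : ℝ) : ℂ) ^ 3 * Complex.exp (↑a * ↑t * Complex.I) := by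
    intro t
    rw [hg_def]
    exact key_pt a t
  -- value of the complex integral
  have hInt4 : ∫ t : ℝ, ((1 / Real.cosh t : ℝ) : ℂ) ^ 3 * Complex.exp (↑a * ↑t * Complex.I)
      = 4 * Complex.betaIntegral u v := by
    rw [hBeta, hEq, MeasureTheory.setIntegral_univ]
    rw [show (fun t : ℝ => ((1 / Real.cosh t : ℝ) : ℂ) ^ 3 * Complex.exp (↑a * ↑t * Complex.I))
        = fun t : ℝ => (4:ℂ) * (|1 / (2 * Real.cosh t ^ 2)| • g (sigm t)) from
      funext fun t => by rw [hkey t]; ring]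
    rw [MeasureTheory.integral_const_mul]
  -- integrability
  have hbc := Complex.betaIntegral_convergent hu hv
  have hgIoo : MeasureTheory.IntegrableOn g (Set.Ioo (0:ℝ) 1) := by
    have := (intervalIntegrable_iff_integrableOn_Ioc_of_le zero_le_one).mp hbc
    exact this.mono_set Set.Ioo_subset_Ioc_self
  have hsm : MeasureTheory.Integrable
      (fun t : ℝ => |1 / (2 * Real.cosh t ^ 2)| • g (sigm t)) := by
    have := MeasureTheory.integrableOn_image_iff_integrableOn_abs_deriv_smul
      MeasurableSet.univ hderiv sigm_inj g
    rw [sigm_image] at this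
    have h2 := this.mp hgIoo
    rwa [MeasureTheory.integrableOn_univ] at h2
  have hF : MeasureTheory.Integrable
      (fun t : ℝ => ((1 / Real.cosh t : ℝ) : ℂ) ^ 3 * Complex.exp (↑a * ↑t * Complex.I)) := by
    have h4 := hsm.const_mul (4:ℂ)
    exact h4.congr (Filter.Eventually.of_forall fun t => by beta_reduce; rw [hkey t]; ring)
  -- Gamma computations
  have hu0 : u - 1 ≠ 0 := by
    intro h
    have := congrArg Complex.re h
    simp [hu_def] at this
    norm_num at this
  have hv0 : v - 1 ≠ 0 := by
    intro h
    have := congrArg Complex.re h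
    simp [hv_def] at this
    norm_num at this
  have hG3 : Complex.Gamma (u + v) = 2 := by
    rw [show u + v = ((2:ℕ):ℂ) + 1 by rw [hu_def, hv_def]; push_cast; ring,
      Complex.Gamma_nat_eq_factorial]
    norm_num
  have hGu : Complex.Gamma u = (u - 1) * Complex.Gamma (u - 1) := by
    conv_lhs => rw [show u = (u - 1) + 1 by ring]
    exact Complex.Gamma_add_one _ hu0
  have hGv : Complex.Gamma v = (v - 1) * Complex.Gamma (v - 1) := by
    conv_lhs => rw [show v = (v - 1) + 1 by ring]
    exact Complex.Gamma_add_one _ hv0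
  have hvu : 1 - (u - 1) = v - 1 := by rw [hu_def, hv_def]; ring
  have hrefl := Complex.Gamma_mul_Gamma_one_sub (u - 1)
  rw [hvu] at hrefl
  have hsin : Complex.sin (↑Real.pi * (u - 1)) = (Real.cosh (Real.pi * a / 2) : ℂ) := by
    rw [show (↑Real.pi : ℂ) * (u - 1) = ↑(Real.pi/2) + ↑(Real.pi * a / 2) * Complex.I by
      rw [hu_def]; push_cast; ring]
    rw [Complex.sin_add, ← Complex.ofReal_sin, ← Complex.ofReal_cos,
      Real.sin_pi_div_two, Real.cos_pi_div_two, Complex.cos_mul_I, Complex.ofReal_cosh]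
    simp
  have hprod : (u - 1) * (v - 1) = (((1 + a^2)/4 : ℝ) : ℂ) := by
    rw [hu_def, hv_def]; push_cast
    linear_combination (-(a:ℂ)^2/4) * Complex.I_sq
  have hbeta := Complex.Gamma_mul_Gamma_eq_betaIntegral hu hv
  rw [hGu, hGv, hG3] at hbeta
  have hB : 2 * Complex.betaIntegral u v
      = (u - 1) * (v - 1) * (↑Real.pi / Complex.sin (↑Real.pi * (u - 1))) := by
    rw [← hrefl]; linear_combination -hbeta
  have hC : (Real.cosh (Real.pi * a / 2) : ℂ) ≠ 0 := by exact_mod_cast hc2.ne'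
  rw [hsin, hprod] at hB
  have hval : (4 : ℂ) * Complex.betaIntegral u v
      = ((Real.pi * (1 + a^2) / (2 * Real.cosh (Real.pi * a / 2)) : ℝ) : ℂ) := by
    have h2 : (4:ℂ) * Complex.betaIntegral u v
        = 2 * ((((1 + a^2)/4 : ℝ) : ℂ) * (↑Real.pi / (Real.cosh (Real.pi * a / 2) : ℂ))) := by
      linear_combination 2 * hB
    rw [h2]; push_cast; field_simp; ring
  -- take real parts
  have hre := integral_re hF
  simp only [RCLike.re_to_complex] at hre
  calc ∫ t : ℝ, (1 / Real.cosh t) ^ 3 * Real.cos (a * t)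
      = ∫ t : ℝ, (((1 / Real.cosh t : ℝ) : ℂ) ^ 3 * Complex.exp (↑a * ↑t * Complex.I)).re := by
        congr 1
        funext t
        rw [show (((1 / Real.cosh t : ℝ)) : ℂ) ^ 3 = (((1 / Real.cosh t) ^ 3 : ℝ) : ℂ) by
            push_cast; ring,
          show (↑a * ↑t : ℂ) = ((a * t : ℝ) : ℂ) by push_cast; ring,
          Complex.re_ofReal_mul, Complex.exp_ofReal_mul_I_re]
    _ = (∫ t : ℝ, ((1 / Real.cosh t : ℝ) : ℂ) ^ 3 * Complex.exp (↑a * ↑t * Complex.I)).re := hre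
    _ = Real.pi * (1 + a ^ 2) / (2 * Real.cosh (Real.pi * a / 2)) := by
        rw [hInt4, hval, Complex.ofReal_re]
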